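/- The system ECNZ^Δ is strongly complete with respect to the class of all (cnz)-frames: every ECNZ^Δ-consistent set of formulas is satisfiable at some state of some neighborhood model whose neighborhood function at every state is closed under binary intersections, contains the unit S, and is closed under complements. -/

import Mathlib

/-- The language L(Δ) of contingency logic: φ ::= p | ¬φ | (φ ∧ φ) | Δφ. -/
inductive Formula (P : Type) : Type
  | atom : P → Formula P
  | neg : Formula P → Formula P
  | and : Formula P → Formula P → Formula P
  | delta : Formula P → Formula P

namespace Formula

variable {P : Type}

/-- φ ∨ ψ abbreviates ¬(¬φ ∧ ¬ψ). -/
def or (φ ψ : Formula P) : Formula P := neg (and (neg φ) (neg ψ))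

/-- φ → ψ abbreviates ¬(φ ∧ ¬ψ). -/
def imp (φ ψ : Formula P) : Formula P := neg (and φ (neg ψ))

/-- φ ↔ ψ abbreviates (φ → ψ) ∧ (ψ → φ). -/
def iffF (φ ψ : Formula P) : Formula P := and (imp φ ψ) (imp ψ φ)

end Formula

/-- ⊤ : a fixed tautology (p ∨ ¬p for a fixed propositional variable p). -/
noncomputable def Formula.top (P : Type) [Nonempty P] : Formula P :=
  Formula.or (Formula.atom (Classical.arbitrary P))
    (Formula.neg (Formula.atom (Classical.arbitrary P)))

/-- A neighborhood model ⟨S, N, V⟩: a nonempty set of states `S`, a neighborhood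
function `N : S → P(P(S))` and a valuation `V`. -/
structure NbhdModel (P : Type) where
  S : Type
  nonempty : Nonempty S
  N : S → Set (Set S)
  V : P → Set S

/-- The truth set ⟦φ⟧ of a formula in a neighborhood model; the clause for `Δφ` says
that a state `s` satisfies `Δφ` iff ⟦φ⟧ ∈ N(s) or S ∖ ⟦φ⟧ ∈ N(s). -/
def NbhdModel.truthSet {P : Type} (M : NbhdModel P) : Formula P → Set M.S
  | .atom p => M.V p
  | .neg φ => (M.truthSet φ)ᶜ
  | .and φ ψ => M.truthSet φ ∩ M.truthSet ψ
  | .delta φ => {s | M.truthSet φ ∈ M.N s ∨ (M.truthSet φ)ᶜ ∈ M.N s}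

/-- Satisfaction: M,s ⊨ φ. -/
def NbhdModel.sat {P : Type} (M : NbhdModel P) (s : M.S) (φ : Formula P) : Prop :=
  s ∈ M.truthSet φ

/-- Frame property (m): closure under supersets. -/
def SupersetClosed {S : Type} (N : S → Set (Set S)) : Prop :=
  ∀ s : S, ∀ X Y : Set S, X ∈ N s → X ⊆ Y → Y ∈ N s

/-- Frame property (c): closure under binary intersections. -/
def InterClosed {S : Type} (N : S → Set (Set S)) : Prop :=
  ∀ s : S, ∀ X Y : Set S, X ∈ N s → Y ∈ N s → X ∩ Y ∈ N s

/-- Frame property (n): contains the unit. -/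
def ContainsUnit {S : Type} (N : S → Set (Set S)) : Prop :=
  ∀ s : S, (Set.univ : Set S) ∈ N s

/-- Frame property (z): closure under complements. -/
def ComplClosed {S : Type} (N : S → Set (Set S)) : Prop :=
  ∀ s : S, ∀ X : Set S, X ∈ N s → Xᶜ ∈ N s

/-- The supplementation of a neighborhood function:
`N⁺(s) = {X ⊆ S : Y ⊆ X for some Y ∈ N(s)}`. -/
def suppN {S : Type} (N : S → Set (Set S)) (s : S) : Set (Set S) :=
  {X | ∃ Y ∈ N s, Y ⊆ X}

/-- `φ` is a substitution instance of a propositional tautology: every Boolean valuation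
of formulas that respects `¬` and `∧` (treating atoms and Δ-formulas as atomic) makes
`φ` true. -/
def Tautology {P : Type} (φ : Formula P) : Prop :=
  ∀ v : Formula P → Bool,
    (∀ ψ, v (Formula.neg ψ) = !(v ψ)) →
    (∀ ψ χ, v (Formula.and ψ χ) = (v ψ && v χ)) →
    v φ = true

/-- Derivability in the system E^Δ (TAUT + ΔEqu + MP + REΔ) extended with the
additional axioms in `Ax`. -/
inductive Deriv {P : Type} (Ax : Set (Formula P)) : Formula P → Prop
  | ax {φ} (h : φ ∈ Ax) : Deriv Ax φ
  | taut {φ} (h : Tautology φ) : Deriv Ax φ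
  | equ (φ) : Deriv Ax (Formula.iffF (Formula.delta φ) (Formula.delta (Formula.neg φ)))
  | mp {φ ψ} (h1 : Deriv Ax (Formula.imp φ ψ)) (h2 : Deriv Ax φ) : Deriv Ax ψ
  | re {φ ψ} (h : Deriv Ax (Formula.iffF φ ψ)) :
      Deriv Ax (Formula.iffF (Formula.delta φ) (Formula.delta ψ))

/-- Derivability of `φ` from the set of premises `Γ` in the system E^Δ + `Ax`. -/
inductive DerivFrom {P : Type} (Ax Γ : Set (Formula P)) : Formula P → Prop
  | mem {φ} (h : φ ∈ Γ) : DerivFrom Ax Γ φ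
  | thm {φ} (h : Deriv Ax φ) : DerivFrom Ax Γ φ
  | mp {φ ψ} (h1 : DerivFrom Ax Γ (Formula.imp φ ψ)) (h2 : DerivFrom Ax Γ φ) :
      DerivFrom Ax Γ ψ

/-- `Γ` is consistent in the system E^Δ + `Ax`: no contradiction is derivable from `Γ`. -/
def Consistent {P : Type} (Ax Γ : Set (Formula P)) : Prop :=
  ¬ ∃ φ : Formula P, DerivFrom Ax Γ φ ∧ DerivFrom Ax Γ (Formula.neg φ)

/-- The axiom ΔM: all instances of Δφ → Δ(φ ∨ ψ) ∨ Δ(¬φ ∨ χ). -/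
def AxDeltaM {P : Type} : Set (Formula P) :=
  {f | ∃ φ ψ χ : Formula P,
     f = Formula.imp (Formula.delta φ)
           (Formula.or (Formula.delta (Formula.or φ ψ))
                       (Formula.delta (Formula.or (Formula.neg φ) χ)))}

/-- The axiom ΔC: all instances of (Δφ ∧ Δψ) → Δ(φ ∧ ψ). -/
def AxDeltaC {P : Type} : Set (Formula P) :=
  {f | ∃ φ ψ : Formula P,
     f = Formula.imp (Formula.and (Formula.delta φ) (Formula.delta ψ))
           (Formula.delta (Formula.and φ ψ))}

/-- The axiom ΔN: Δ⊤. -/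
noncomputable def AxDeltaN (P : Type) [Nonempty P] : Set (Formula P) :=
  {Formula.delta (Formula.top P)}

/-! ### Auxiliary material for the completeness proof -/

section CompletenessAux

variable {P : Type}

open Formula

/-! #### Tautologies -/

private lemma tI (A : Formula P) : Tautology (A.imp A) := by
  intro v hn ha
  simp only [Formula.imp, hn, ha]
  cases v A <;> simp

private lemma tK (A B : Formula P) : Tautology (A.imp (B.imp A)) := by
  intro v hn ha
  simp only [Formula.imp, hn, ha]
  cases v A <;> cases v B <;> simp

private lemma tS (A B C : Formula P) :
    Tautology ((A.imp (B.imp C)).imp ((A.imp B).imp (A.imp C))) := by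
  intro v hn ha
  simp only [Formula.imp, hn, ha]
  cases v A <;> cases v B <;> cases v C <;> simp

private lemma tRAA (A B : Formula P) :
    Tautology ((A.imp B).imp ((A.imp B.neg).imp A.neg)) := by
  intro v hn ha
  simp only [Formula.imp, hn, ha]
  cases v A <;> cases v B <;> simp

private lemma tDNE (A : Formula P) : Tautology (A.neg.neg.imp A) := by
  intro v hn ha
  simp only [Formula.imp, hn, ha]
  cases v A <;> simp

private lemma tAndI (A B : Formula P) : Tautology (A.imp (B.imp (A.and B))) := by
  intro v hn ha
  simp only [Formula.imp, hn, ha]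
  cases v A <;> cases v B <;> simp

private lemma tAndE1 (A B : Formula P) : Tautology ((A.and B).imp A) := by
  intro v hn ha
  simp only [Formula.imp, hn, ha]
  cases v A <;> cases v B <;> simp

private lemma tAndE2 (A B : Formula P) : Tautology ((A.and B).imp B) := by
  intro v hn ha
  simp only [Formula.imp, hn, ha]
  cases v A <;> cases v B <;> simp

private lemma tIffE1 (A B : Formula P) : Tautology ((A.iffF B).imp (A.imp B)) := by
  intro v hn ha
  simp only [Formula.imp, Formula.iffF, hn, ha]
  cases v A <;> cases v B <;> simp

private lemma tIffE2 (A B : Formula P) : Tautology ((A.iffF B).imp (B.imp A)) := by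
  intro v hn ha
  simp only [Formula.imp, Formula.iffF, hn, ha]
  cases v A <;> cases v B <;> simp

private lemma tIffI (A B : Formula P) :
    Tautology ((A.imp B).imp ((B.imp A).imp (A.iffF B))) := by
  intro v hn ha
  simp only [Formula.imp, Formula.iffF, hn, ha]
  cases v A <;> cases v B <;> simp

private lemma tTop [Nonempty P] : Tautology (Formula.top P) := by
  intro v hn ha
  simp only [Formula.top, Formula.or, hn, ha]
  cases v (Formula.atom (Classical.arbitrary P)) <;> simp

/-! #### Basic facts about derivability -/

private lemma DerivFrom.mono {Ax Γ Δ : Set (Formula P)} (h : Γ ⊆ Δ) {φ : Formula P}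
    (hd : DerivFrom Ax Γ φ) : DerivFrom Ax Δ φ := by
  induction hd with
  | mem hm => exact .mem (h hm)
  | thm ht => exact .thm ht
  | mp _ _ ih1 ih2 => exact .mp ih1 ih2

private lemma derivFrom_empty {Ax : Set (Formula P)} {φ : Formula P}
    (h : DerivFrom Ax ∅ φ) : Deriv Ax φ := by
  induction h with
  | mem hm => exact absurd hm (Set.notMem_empty _)
  | thm ht => exact ht
  | mp _ _ ih1 ih2 => exact ih1.mp ih2

private lemma deduction {Ax Γ : Set (Formula P)} {φ ψ : Formula P}
    (h : DerivFrom Ax (insert φ Γ) ψ) : DerivFrom Ax Γ (φ.imp ψ) := by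
  induction h with
  | @mem χ hm =>
    rcases hm with rfl | hm
    · exact .thm (.taut (tI χ))
    · exact .mp (.thm (.taut (tK χ φ))) (.mem hm)
  | @thm χ ht => exact .mp (.thm (.taut (tK χ φ))) (.thm ht)
  | @mp χ ξ _ _ ih1 ih2 => exact .mp (.mp (.thm (.taut (tS φ χ ξ))) ih1) ih2

private lemma inconsistent_iff {Ax Γ : Set (Formula P)} :
    ¬ Consistent Ax Γ ↔ ∃ φ, DerivFrom Ax Γ φ ∧ DerivFrom Ax Γ (Formula.neg φ) := by
  simp [Consistent]

private lemma neg_of_insert_inconsistent {Ax Γ : Set (Formula P)} {φ : Formula P}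
    (h : ¬ Consistent Ax (insert φ Γ)) : DerivFrom Ax Γ φ.neg := by
  obtain ⟨ψ, h1, h2⟩ := inconsistent_iff.mp h
  exact .mp (.mp (.thm (.taut (tRAA φ ψ))) (deduction h1)) (deduction h2)

/-! #### Maximal consistent sets -/

private def MCS (Ax s : Set (Formula P)) : Prop :=
  Consistent Ax s ∧ ∀ φ, φ ∉ s → ¬ Consistent Ax (insert φ s)

variable {Ax : Set (Formula P)}

private lemma MCS.closed {s : Set (Formula P)} (hs : MCS Ax s) {φ : Formula P}
    (h : DerivFrom Ax s φ) : φ ∈ s := by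
  by_contra hφ
  exact hs.1 ⟨φ, h, neg_of_insert_inconsistent (hs.2 φ hφ)⟩

private lemma MCS.mem_of_deriv {s : Set (Formula P)} (hs : MCS Ax s) {φ : Formula P}
    (h : Deriv Ax φ) : φ ∈ s := hs.closed (.thm h)

private lemma MCS.neg_mem_iff {s : Set (Formula P)} (hs : MCS Ax s) {φ : Formula P} :
    φ.neg ∈ s ↔ φ ∉ s := by
  constructor
  · intro hn hφ
    exact hs.1 ⟨φ, .mem hφ, .mem hn⟩
  · intro hφ
    exact hs.closed (neg_of_insert_inconsistent (hs.2 φ hφ))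

private lemma MCS.and_mem_iff {s : Set (Formula P)} (hs : MCS Ax s) {φ ψ : Formula P} :
    φ.and ψ ∈ s ↔ φ ∈ s ∧ ψ ∈ s := by
  constructor
  · intro h
    exact ⟨hs.closed (.mp (.thm (.taut (tAndE1 φ ψ))) (.mem h)),
           hs.closed (.mp (.thm (.taut (tAndE2 φ ψ))) (.mem h))⟩
  · rintro ⟨h1, h2⟩
    exact hs.closed (.mp (.mp (.thm (.taut (tAndI φ ψ))) (.mem h1)) (.mem h2))

private lemma MCS.iff_mem {s : Set (Formula P)} (hs : MCS Ax s) {φ ψ : Formula P}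
    (h : Deriv Ax (φ.iffF ψ)) : φ ∈ s ↔ ψ ∈ s := by
  have h1 : Deriv Ax (φ.imp ψ) := Deriv.mp (.taut (tIffE1 φ ψ)) h
  have h2 : Deriv Ax (ψ.imp φ) := Deriv.mp (.taut (tIffE2 φ ψ)) h
  constructor
  · intro hm; exact hs.closed (.mp (.thm h1) (.mem hm))
  · intro hm; exact hs.closed (.mp (.thm h2) (.mem hm))

/-! #### Lindenbaum's lemma -/

private lemma derivFrom_sUnion {c : Set (Set (Formula P))} (hc : IsChain (· ⊆ ·) c)
    (hne : c.Nonempty) {φ : Formula P} (h : DerivFrom Ax (⋃₀ c) φ) :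
    ∃ Δ ∈ c, DerivFrom Ax Δ φ := by
  induction h with
  | mem hm =>
    obtain ⟨Δ, hΔ, hφΔ⟩ := hm
    exact ⟨Δ, hΔ, .mem hφΔ⟩
  | thm ht => exact ⟨hne.choose, hne.choose_spec, .thm ht⟩
  | mp _ _ ih1 ih2 =>
    obtain ⟨Δ1, hΔ1, hd1⟩ := ih1
    obtain ⟨Δ2, hΔ2, hd2⟩ := ih2
    rcases eq_or_ne Δ1 Δ2 with rfl | hne'
    · exact ⟨Δ1, hΔ1, hd1.mp hd2⟩
    · rcases hc hΔ1 hΔ2 hne' with hsub | hsub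
      · exact ⟨Δ2, hΔ2, (hd1.mono hsub).mp hd2⟩
      · exact ⟨Δ1, hΔ1, hd1.mp (hd2.mono hsub)⟩

private lemma consistent_mono {Γ Δ : Set (Formula P)} (h : Γ ⊆ Δ)
    (hΔ : Consistent Ax Δ) : Consistent Ax Γ := by
  rintro ⟨φ, h1, h2⟩
  exact hΔ ⟨φ, h1.mono h, h2.mono h⟩

private lemma lindenbaum {Γ : Set (Formula P)} (h : Consistent Ax Γ) :
    ∃ s, Γ ⊆ s ∧ MCS Ax s := by
  have hub : ∀ c ⊆ {Δ | Consistent Ax Δ}, IsChain (· ⊆ ·) c → c.Nonempty →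
      ∃ ub ∈ {Δ | Consistent Ax Δ}, ∀ s ∈ c, s ⊆ ub := by
    intro c hcS hchain hcne
    refine ⟨⋃₀ c, ?_, fun s hs => Set.subset_sUnion_of_mem hs⟩
    rintro ⟨φ, h1, h2⟩
    obtain ⟨Δ1, hΔ1, hd1⟩ := derivFrom_sUnion hchain hcne h1
    obtain ⟨Δ2, hΔ2, hd2⟩ := derivFrom_sUnion hchain hcne h2
    rcases eq_or_ne Δ1 Δ2 with rfl | hne'
    · exact hcS hΔ1 ⟨φ, hd1, hd2⟩
    · rcases hchain hΔ1 hΔ2 hne' with hsub | hsub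
      · exact hcS hΔ2 ⟨φ, hd1.mono hsub, hd2⟩
      · exact hcS hΔ1 ⟨φ, hd1, hd2.mono hsub⟩
  obtain ⟨m, hΓm, hmem, hmax⟩ :=
    zorn_subset_nonempty {Δ | Consistent Ax Δ} hub Γ h
  refine ⟨m, hΓm, hmem, ?_⟩
  intro φ hφ hcon
  have := hmax hcon (Set.subset_insert φ m)
  exact hφ (this (Set.mem_insert φ m))

/-! #### The canonical model -/

private abbrev canonS (Ax : Set (Formula P)) : Type := {s : Set (Formula P) // MCS Ax s}

private def proofSet (Ax : Set (Formula P)) (φ : Formula P) : Set (canonS Ax) :=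
  {s | φ ∈ s.1}

private def canonN (Ax : Set (Formula P)) (s : canonS Ax) : Set (Set (canonS Ax)) :=
  {X | ∃ φ, Formula.delta φ ∈ s.1 ∧ (X = proofSet Ax φ ∨ X = (proofSet Ax φ)ᶜ)}

private def canonM (Ax : Set (Formula P)) (h : Nonempty (canonS Ax)) : NbhdModel P :=
  ⟨canonS Ax, h, canonN Ax, fun p => proofSet Ax (Formula.atom p)⟩

private lemma proofSet_neg (φ : Formula P) :
    (proofSet Ax φ)ᶜ = proofSet Ax φ.neg := by
  ext s
  simp [proofSet, s.2.neg_mem_iff]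

private lemma proofSet_inter (φ ψ : Formula P) :
    proofSet Ax φ ∩ proofSet Ax ψ = proofSet Ax (φ.and ψ) := by
  ext s
  simp [proofSet, s.2.and_mem_iff]

private lemma deriv_imp_of_proofSet_subset {φ ψ : Formula P}
    (h : proofSet Ax φ ⊆ proofSet Ax ψ) : Deriv Ax (φ.imp ψ) := by
  by_contra hd
  have hc : Consistent Ax (insert ψ.neg (insert φ (∅ : Set (Formula P)))) := by
    intro hinc
    have h1 : DerivFrom Ax (insert φ (∅ : Set (Formula P))) ψ.neg.neg :=
      neg_of_insert_inconsistent (fun hcons => hcons hinc)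
    have h2 : DerivFrom Ax (insert φ (∅ : Set (Formula P))) ψ :=
      .mp (.thm (.taut (tDNE ψ))) h1
    exact hd (derivFrom_empty (deduction h2))
  obtain ⟨m, hm, hmcs⟩ := lindenbaum hc
  have hφ : φ ∈ m := hm (Set.mem_insert_of_mem _ (Set.mem_insert φ ∅))
  have hψn : ψ.neg ∈ m := hm (Set.mem_insert _ _)
  have hψ : ψ ∈ m := h (show (⟨m, hmcs⟩ : canonS Ax) ∈ proofSet Ax φ from hφ)
  exact hmcs.1 ⟨ψ, .mem hψ, .mem hψn⟩

private lemma deriv_iff_of_proofSet_eq {φ ψ : Formula P}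
    (h : proofSet Ax φ = proofSet Ax ψ) : Deriv Ax (φ.iffF ψ) :=
  Deriv.mp (Deriv.mp (.taut (tIffI φ ψ)) (deriv_imp_of_proofSet_subset h.subset))
    (deriv_imp_of_proofSet_subset h.symm.subset)

private lemma mcs_delta_of_proofSet_eq {s : Set (Formula P)} (hs : MCS Ax s)
    {φ ψ : Formula P} (h : proofSet Ax φ = proofSet Ax ψ)
    (hψ : Formula.delta ψ ∈ s) : Formula.delta φ ∈ s :=
  (hs.iff_mem (Deriv.re (deriv_iff_of_proofSet_eq h))).mpr hψ

/-! #### The truth lemma -/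

private lemma truth_lemma (Ax : Set (Formula P)) (hne : Nonempty (canonS Ax))
    (φ : Formula P) : (canonM Ax hne).truthSet φ = proofSet Ax φ := by
  induction φ with
  | atom p => rfl
  | neg φ ih =>
    show ((canonM Ax hne).truthSet φ)ᶜ = _
    rw [ih]
    exact proofSet_neg φ
  | and φ ψ ih1 ih2 =>
    show (canonM Ax hne).truthSet φ ∩ (canonM Ax hne).truthSet ψ = _
    rw [ih1, ih2]
    exact proofSet_inter φ ψ
  | delta φ ih =>
    ext s
    show ((canonM Ax hne).truthSet φ ∈ canonN Ax s ∨
        ((canonM Ax hne).truthSet φ)ᶜ ∈ canonN Ax s) ↔ Formula.delta φ ∈ s.1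
    rw [ih]
    change (proofSet Ax φ ∈ canonN Ax s ∨ (proofSet Ax φ : Set (canonS Ax))ᶜ ∈ canonN Ax s) ↔ _
    constructor
    · rintro (⟨ψ, hψ, hor⟩ | ⟨ψ, hψ, hor⟩)
      · rcases hor with heq | heq
        · exact mcs_delta_of_proofSet_eq s.2 heq hψ
        · rw [proofSet_neg] at heq
          have : Formula.delta ψ.neg ∈ s.1 :=
            (s.2.iff_mem (Deriv.equ ψ)).mp hψ
          exact mcs_delta_of_proofSet_eq s.2 heq this
      · rw [proofSet_neg] at hor
        have hd : Formula.delta φ.neg ∈ s.1 := by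
          rcases hor with heq | heq
          · exact mcs_delta_of_proofSet_eq s.2 heq hψ
          · rw [proofSet_neg] at heq
            have : Formula.delta ψ.neg ∈ s.1 :=
              (s.2.iff_mem (Deriv.equ ψ)).mp hψ
            exact mcs_delta_of_proofSet_eq s.2 heq this
        exact (s.2.iff_mem (Deriv.equ φ)).mpr hd
    · intro h
      exact Or.inl ⟨φ, h, Or.inl rfl⟩

end CompletenessAux

/-- the system ECNZ^Δ = E^Δ + ΔC + ΔN is strongly complete with respect
to the class of all (cnz)-frames. -/
theorem ECNZ_strongly_complete {P : Type} [Nonempty P]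
    (Γ : Set (Formula P)) (hcon : Consistent (AxDeltaC ∪ AxDeltaN P) Γ) :
    ∃ (M : NbhdModel P) (s : M.S),
      InterClosed M.N ∧ ContainsUnit M.N ∧ ComplClosed M.N ∧ ∀ φ ∈ Γ, M.sat s φ := by
  classical
  obtain ⟨m, hΓm, hm⟩ := lindenbaum hcon
  set Ax : Set (Formula P) := AxDeltaC ∪ AxDeltaN P with hAx
  have hne : Nonempty (canonS Ax) := ⟨⟨m, hm⟩⟩
  refine ⟨canonM Ax hne, ⟨m, hm⟩, ?_, ?_, ?_, ?_⟩
  · -- InterClosed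
    intro s X Y hX hY
    have norm : ∀ Z ∈ canonN Ax s, ∃ χ, Formula.delta χ ∈ s.1 ∧ Z = proofSet Ax χ := by
      rintro Z ⟨χ, hχ, (rfl | rfl)⟩
      · exact ⟨χ, hχ, rfl⟩
      · exact ⟨χ.neg, (s.2.iff_mem (Deriv.equ χ)).mp hχ, proofSet_neg χ⟩
    obtain ⟨χ1, h1, rfl⟩ := norm X hX
    obtain ⟨χ2, h2, rfl⟩ := norm Y hY
    refine ⟨χ1.and χ2, ?_, Or.inl (proofSet_inter χ1 χ2)⟩
    have hax : Formula.imp ((Formula.delta χ1).and (Formula.delta χ2))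
        (Formula.delta (χ1.and χ2)) ∈ Ax := Or.inl ⟨χ1, χ2, rfl⟩
    have hconj : (Formula.delta χ1).and (Formula.delta χ2) ∈ s.1 :=
      s.2.and_mem_iff.mpr ⟨h1, h2⟩
    exact s.2.closed (.mp (.thm (.ax hax)) (.mem hconj))
  · -- ContainsUnit
    intro s
    have htop : Formula.delta (Formula.top P) ∈ s.1 :=
      s.2.mem_of_deriv (.ax (Or.inr rfl))
    refine ⟨Formula.top P, htop, Or.inl (Set.eq_univ_of_forall ?_).symm⟩
    exact fun t => t.2.mem_of_deriv (Deriv.taut tTop)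
  · -- ComplClosed
    rintro s X ⟨χ, hχ, (rfl | rfl)⟩
    · exact ⟨χ, hχ, Or.inr rfl⟩
    · exact ⟨χ, hχ, Or.inl (compl_compl _)⟩
  · intro φ hφ
    show _ ∈ (canonM Ax hne).truthSet φ
    rw [truth_lemma]
    exact hΓm hφ
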